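/- Let G be a finite connected simple graph with maximum degree Δ(G) ≥ 2, minimum degree δ(G), and order n(G). Then the zero forcing number satisfies Z(G) = F_1(G) ≤ ((Δ(G) − 2)·n(G) − (Δ(G) − δ(G)) + 2) / (Δ(G) − 1). -/

import Mathlib

/-- One step of the `k`-forcing color change process: a colored vertex (in `S`)
with at most `k` non-colored neighbors causes all of its neighbors to become colored. -/
def kStep {V : Type*} [Fintype V] [DecidableEq V] (G : SimpleGraph V) [DecidableRel G.Adj]
    (k : ℕ) (S : Finset V) : Finset V :=
  S ∪ Finset.univ.filter (fun v => ∃ u ∈ S, G.Adj u v ∧ (G.neighborFinset u \ S).card ≤ k)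

/-- `S` is a `k`-forcing set if iterating the color change rule starting from `S`
eventually colors all vertices of `G`. -/
def IsKForcingSet {V : Type*} [Fintype V] [DecidableEq V] (G : SimpleGraph V)
    [DecidableRel G.Adj] (k : ℕ) (S : Finset V) : Prop :=
  ∃ n : ℕ, (kStep G k)^[n] S = Finset.univ

/-- The `k`-forcing number `F_k(G)`: the minimum cardinality of a `k`-forcing set. -/
noncomputable def kForcingNumber {V : Type*} [Fintype V] [DecidableEq V] (G : SimpleGraph V)
    [DecidableRel G.Adj] (k : ℕ) : ℕ :=
  sInf {m | ∃ S : Finset V, S.card = m ∧ IsKForcingSet G k S}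

/-- The zero forcing number `Z(G) = F_1(G)`. -/
noncomputable def zeroForcingNumber {V : Type*} [Fintype V] [DecidableEq V]
    (G : SimpleGraph V) [DecidableRel G.Adj] : ℕ :=
  kForcingNumber G 1

section Aux

variable {V : Type*} [Fintype V] [DecidableEq V] (G : SimpleGraph V) [DecidableRel G.Adj]

lemma subset_kStep (k : ℕ) (S : Finset V) : S ⊆ kStep G k S :=
  Finset.subset_union_left

lemma kStep_mono (k : ℕ) {S T : Finset V} (h : S ⊆ T) : kStep G k S ⊆ kStep G k T := by
  apply Finset.union_subset_union h
  intro v hv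
  simp only [Finset.mem_filter, Finset.mem_univ, true_and] at hv ⊢
  obtain ⟨u, hu, hadj, hcard⟩ := hv
  exact ⟨u, h hu, hadj,
    le_trans (Finset.card_le_card (Finset.sdiff_subset_sdiff le_rfl h)) hcard⟩

lemma kStep_iterate_mono (k n : ℕ) {S T : Finset V} (h : S ⊆ T) :
    (kStep G k)^[n] S ⊆ (kStep G k)^[n] T := by
  induction n generalizing S T with
  | zero => exact h
  | succ n ih =>
    rw [Function.iterate_succ_apply, Function.iterate_succ_apply]
    exact ih (kStep_mono G k h)

lemma isKForcingSet_mono {k : ℕ} {S T : Finset V} (h : S ⊆ T) (hS : IsKForcingSet G k S) :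
    IsKForcingSet G k T := by
  obtain ⟨n, hn⟩ := hS
  refine ⟨n, Finset.eq_univ_of_forall fun v => ?_⟩
  exact kStep_iterate_mono G k n h (hn ▸ Finset.mem_univ v)

lemma isKForcingSet_of_subset_kStep {k : ℕ} {S T : Finset V} (hT : T ⊆ kStep G k S)
    (h : IsKForcingSet G k T) : IsKForcingSet G k S := by
  obtain ⟨n, hn⟩ := h
  refine ⟨n + 1, Finset.eq_univ_of_forall fun v => ?_⟩
  rw [Function.iterate_succ_apply]
  exact kStep_iterate_mono G k n hT (hn ▸ Finset.mem_univ v)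

lemma walk_boundary {C : Finset V} : ∀ {a b : V}, G.Walk a b → a ∈ C → b ∉ C →
    ∃ u ∈ C, ∃ v, v ∉ C ∧ G.Adj u v := by
  intro a b p
  induction p with
  | nil => intro h h'; exact absurd h h'
  | @cons x y z h p ih =>
    intro ha hb
    by_cases hm : y ∈ C
    · exact ih hm hb
    · exact ⟨x, ha, y, hm, h⟩

lemma exists_boundary (hpre : G.Preconnected) {C : Finset V} (hne : C.Nonempty)
    (hC : C ≠ Finset.univ) : ∃ u ∈ C, ∃ v, v ∉ C ∧ G.Adj u v := by
  obtain ⟨a, ha⟩ := hne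
  have : ∃ b, b ∉ C := by
    by_contra h
    push_neg at h
    exact hC (Finset.eq_univ_of_forall h)
  obtain ⟨b, hb⟩ := this
  obtain ⟨p⟩ := hpre a b
  exact walk_boundary G p ha hb

/-- Arithmetic helper over ℕ. -/
lemma nat_arith {d t n x y : ℕ} (h2 : 2 ≤ t) (hd : t + 1 ≤ d) (htn : t ≤ n)
    (hx : x ≤ t - 1 + y) (hy : (d - 1) * y ≤ (d - 2) * (n - t)) :
    (d - 1) * x ≤ (d - 2) * n := by
  obtain ⟨a, rfl⟩ : ∃ a, d = a + 2 := ⟨d - 2, by omega⟩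
  obtain ⟨s, rfl⟩ : ∃ s, t = s + 2 := ⟨t - 2, by omega⟩
  obtain ⟨m, rfl⟩ : ∃ m, n = (s + 2) + m := ⟨n - (s + 2), by omega⟩
  have e1 : a + 2 - 1 = a + 1 := by omega
  have e2 : a + 2 - 2 = a := by omega
  have e3 : s + 2 - 1 = s + 1 := by omega
  have e4 : s + 2 + m - (s + 2) = m := by omega
  rw [e1, e2, e4] at hy
  rw [e3] at hx
  rw [e1, e2]
  have hsa : s + 1 ≤ a := by omega
  calc (a + 1) * x ≤ (a + 1) * (s + 1 + y) := Nat.mul_le_mul_left _ hx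
    _ = (a + 1) * (s + 1) + (a + 1) * y := by ring
    _ ≤ (a + 1) * (s + 1) + a * m := Nat.add_le_add_left hy _
    _ ≤ a * (s + 2 + m) := by nlinarith

/-- The key greedy extension lemma: any nonempty colored set `C` in which every
vertex has a colored neighbor can be extended to a forcing set at cost
`(Δ-2)/(Δ-1)` per uncolored vertex. -/
lemma key_extension (hconn : G.Connected) (hΔ : 2 ≤ G.maxDegree) :
    ∀ n : ℕ, ∀ C : Finset V, (Finset.univ \ C).card = n → C.Nonempty →
      (∀ v ∈ C, ∃ u ∈ C, G.Adj u v) →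
      ∃ T : Finset V, IsKForcingSet G 1 (C ∪ T) ∧
        (G.maxDegree - 1) * T.card ≤ (G.maxDegree - 2) * (Finset.univ \ C).card := by
  intro n
  induction n using Nat.strong_induction_on with
  | _ n ih =>
  intro C hcard hne hinv
  by_cases huniv : C = Finset.univ
  · exact ⟨∅, by rw [Finset.union_empty, huniv]; exact ⟨0, rfl⟩, by simp⟩
  by_cases hstall : kStep G 1 C = C
  · -- stalled case
    obtain ⟨u, huC, v, hvC, hadj⟩ := exists_boundary G hconn.preconnected hne huniv
    set W : Finset V := G.neighborFinset u \ C with hW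
    have hvW : v ∈ W := by
      simp [hW, SimpleGraph.mem_neighborFinset, hadj, hvC]
    have ht2 : 2 ≤ W.card := by
      by_contra h
      push_neg at h
      have : v ∈ kStep G 1 C := by
        apply Finset.mem_union_right
        simp only [Finset.mem_filter, Finset.mem_univ, true_and]
        refine ⟨u, huC, hadj, ?_⟩
        rw [← hW]
        omega
      rw [hstall] at this
      exact hvC this
    have hWd : W.card + 1 ≤ G.maxDegree := by
      obtain ⟨x, hxC, hxadj⟩ := hinv u huC
      have hxN : x ∈ G.neighborFinset u := by
        simp [SimpleGraph.mem_neighborFinset, hxadj.symm]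
      have hsub : W ⊆ (G.neighborFinset u).erase x := by
        intro y hy
        rw [Finset.mem_sdiff] at hy
        exact Finset.mem_erase.mpr ⟨fun h => hy.2 (h ▸ hxC), hy.1⟩
      have := Finset.card_le_card hsub
      rw [Finset.card_erase_of_mem hxN] at this
      have hdeg : (G.neighborFinset u).card = G.degree u := rfl
      have hle := G.degree_le_maxDegree u
      have hpos : 1 ≤ G.degree u := by
        rw [← SimpleGraph.card_neighborFinset_eq_degree]
        exact Finset.card_pos.mpr ⟨x, hxN⟩
      omega
    obtain ⟨w, hwW⟩ : W.Nonempty := Finset.card_pos.mp (by omega)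
    set C₂ : Finset V := C ∪ W.erase w with hC₂
    set C₃ : Finset V := C ∪ W with hC₃
    have hWadj : ∀ y ∈ W, G.Adj u y := by
      intro y hy
      rw [hW, Finset.mem_sdiff, SimpleGraph.mem_neighborFinset] at hy
      exact hy.1
    have h₃₂ : C₃ ⊆ kStep G 1 C₂ := by
      intro y hy
      rw [hC₃, Finset.mem_union] at hy
      rcases hy with hy | hy
      · exact subset_kStep G 1 C₂ (Finset.mem_union_left _ hy)
      · apply Finset.mem_union_right
        simp only [Finset.mem_filter, Finset.mem_univ, true_and]
        refine ⟨u, Finset.mem_union_left _ huC, hWadj y hy, ?_⟩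
        have : G.neighborFinset u \ C₂ ⊆ {w} := by
          intro z hz
          rw [Finset.mem_sdiff, hC₂, Finset.mem_union] at hz
          push_neg at hz
          have hzW : z ∈ W := Finset.mem_sdiff.mpr ⟨hz.1, hz.2.1⟩
          have h' := hz.2.2
          rw [Finset.mem_singleton]
          by_contra hne'
          exact h' (Finset.mem_erase.mpr ⟨hne', hzW⟩)
        calc (G.neighborFinset u \ C₂).card ≤ ({w} : Finset V).card :=
              Finset.card_le_card this
          _ = 1 := Finset.card_singleton w
    have hdisj : Disjoint C W := by
      rw [hW]
      exact Finset.disjoint_sdiff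
    have hcard₃ : (Finset.univ \ C₃).card = n - W.card := by
      have h1 : C₃.card = C.card + W.card := by
        rw [hC₃, Finset.card_union_of_disjoint hdisj]
      have h2 : (Finset.univ \ C₃).card = Fintype.card V - C₃.card := by
        rw [Finset.card_sdiff_of_subset (Finset.subset_univ _), Finset.card_univ]
      have h3 : (Finset.univ \ C).card = Fintype.card V - C.card := by
        rw [Finset.card_sdiff_of_subset (Finset.subset_univ _), Finset.card_univ]
      have h4 : C₃.card ≤ Fintype.card V := by
        rw [← Finset.card_univ]; exact Finset.card_le_card (Finset.subset_univ _)
      omega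
    have hWn : W.card ≤ n := by
      rw [← hcard]
      apply Finset.card_le_card
      intro y hy
      rw [Finset.mem_sdiff] at hy ⊢
      exact ⟨Finset.mem_univ y, hy.2⟩
    have hlt : (Finset.univ \ C₃).card < n := by omega
    obtain ⟨T', hT', hb'⟩ := ih _ hlt C₃ rfl ⟨u, Finset.mem_union_left _ huC⟩
      (by
        intro y hy
        rw [hC₃, Finset.mem_union] at hy
        rcases hy with hy | hy
        · obtain ⟨z, hz, hza⟩ := hinv y hy
          exact ⟨z, Finset.mem_union_left _ hz, hza⟩
        · exact ⟨u, Finset.mem_union_left _ huC, hWadj y hy⟩)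
    refine ⟨W.erase w ∪ T', ?_, ?_⟩
    · have heq : C ∪ (W.erase w ∪ T') = C₂ ∪ T' := by
        rw [hC₂, Finset.union_assoc]
      rw [heq]
      apply isKForcingSet_of_subset_kStep G (T := C₃ ∪ T') _ hT'
      apply Finset.union_subset
      · exact h₃₂.trans (kStep_mono G 1 Finset.subset_union_left)
      · exact (Finset.subset_union_right).trans (subset_kStep G 1 _)
    · have hcardT : (W.erase w ∪ T').card ≤ W.card - 1 + T'.card := by
        calc (W.erase w ∪ T').card ≤ (W.erase w).card + T'.card := Finset.card_union_le _ _
          _ = W.card - 1 + T'.card := by rw [Finset.card_erase_of_mem hwW]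
      rw [hcard]
      rw [hcard₃] at hb'
      exact nat_arith ht2 hWd hWn hcardT hb'
  · -- progress case: kStep C ≠ C
    set C' := kStep G 1 C with hC'
    have hsub : C ⊆ C' := subset_kStep G 1 C
    have hlt : (Finset.univ \ C').card < n := by
      have h1 : C.card < C'.card := by
        apply Finset.card_lt_card
        exact lt_of_le_of_ne hsub (fun h => hstall h.symm)
      have h2 : (Finset.univ \ C').card = Fintype.card V - C'.card := by
        rw [Finset.card_sdiff_of_subset (Finset.subset_univ _), Finset.card_univ]
      have h3 : (Finset.univ \ C).card = Fintype.card V - C.card := by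
        rw [Finset.card_sdiff_of_subset (Finset.subset_univ _), Finset.card_univ]
      have h4 : C'.card ≤ Fintype.card V := by
        rw [← Finset.card_univ]; exact Finset.card_le_card (Finset.subset_univ _)
      omega
    obtain ⟨T, hT, hb⟩ := ih _ hlt C' rfl (hne.mono hsub)
      (by
        intro y hy
        rw [hC'] at hy
        rw [kStep, Finset.mem_union] at hy
        rcases hy with hy | hy
        · obtain ⟨z, hz, hza⟩ := hinv y hy
          exact ⟨z, hsub hz, hza⟩
        · simp only [Finset.mem_filter, Finset.mem_univ, true_and] at hy
          obtain ⟨z, hz, hza, _⟩ := hy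
          exact ⟨z, hsub hz, hza⟩)
    refine ⟨T, ?_, ?_⟩
    · apply isKForcingSet_of_subset_kStep G (T := C' ∪ T) _ hT
      apply Finset.union_subset
      · exact kStep_mono G 1 Finset.subset_union_left
      · exact (Finset.subset_union_right).trans (subset_kStep G 1 _)
    · refine hb.trans (Nat.mul_le_mul_left _ (Finset.card_le_card ?_))
      exact Finset.sdiff_subset_sdiff le_rfl hsub

end Aux

/-- If `G` is connected with `Δ(G) ≥ 2`, then
`Z(G) = F_1(G) ≤ ((Δ-2)n - (Δ-δ) + 2) / (Δ-1)`. -/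


theorem zeroForcingNumber_le {V : Type*} [Fintype V] [DecidableEq V]
    (G : SimpleGraph V) [DecidableRel G.Adj]
    (hconn : G.Connected) (hΔ : 2 ≤ G.maxDegree) :
    zeroForcingNumber G = kForcingNumber G 1 ∧
    (zeroForcingNumber G : ℝ) ≤
      (((G.maxDegree : ℝ) - 2) * (Fintype.card V) - ((G.maxDegree : ℝ) - G.minDegree) + 2) /
        ((G.maxDegree : ℝ) - 1) := by
  refine ⟨rfl, ?_⟩
  have hV : Nonempty V := hconn.nonempty
  obtain ⟨u, hu⟩ := G.exists_minimal_degree_vertex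
  -- u has positive degree
  have hdegpos : 1 ≤ G.degree u := by
    obtain ⟨v, hv⟩ := G.exists_maximal_degree_vertex
    have hvdeg : 2 ≤ G.degree v := hv ▸ hΔ
    by_cases huv : u = v
    · rw [huv]; omega
    · obtain ⟨p⟩ := hconn.preconnected u v
      have hnil : ¬ p.Nil := SimpleGraph.Walk.not_nil_of_ne huv
      have hadj : G.Adj u (p.getVert 1) := p.adj_snd hnil
      rw [← SimpleGraph.card_neighborFinset_eq_degree]
      exact Finset.card_pos.mpr ⟨_, (SimpleGraph.mem_neighborFinset G u _).mpr hadj⟩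
  obtain ⟨w, hw⟩ : (G.neighborFinset u).Nonempty := by
    apply Finset.card_pos.mp
    rwa [SimpleGraph.card_neighborFinset_eq_degree]
  have hwadj : G.Adj u w := (SimpleGraph.mem_neighborFinset G u w).mp hw
  set C : Finset V := insert u (G.neighborFinset u) with hC
  have huniC : u ∉ G.neighborFinset u := by
    simp [SimpleGraph.mem_neighborFinset]
  have hCcard : C.card = G.degree u + 1 := by
    rw [hC, Finset.card_insert_of_notMem huniC, SimpleGraph.card_neighborFinset_eq_degree]
  have hinv : ∀ v ∈ C, ∃ x ∈ C, G.Adj x v := by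
    intro v hv
    rw [hC, Finset.mem_insert] at hv
    rcases hv with rfl | hv
    · exact ⟨w, Finset.mem_insert_of_mem hw, hwadj.symm⟩
    · exact ⟨u, Finset.mem_insert_self _ _, (SimpleGraph.mem_neighborFinset G u v).mp hv⟩
  obtain ⟨T, hT, hb⟩ := key_extension G hconn hΔ _ C rfl ⟨u, Finset.mem_insert_self _ _⟩ hinv
  set S : Finset V := insert u ((G.neighborFinset u).erase w) ∪ T with hS
  -- S is a forcing set
  have hCT : C ∪ T ⊆ kStep G 1 S := by
    apply Finset.union_subset
    · intro y hy
      rw [hC, Finset.mem_insert] at hy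
      rcases hy with rfl | hy
      · exact subset_kStep G 1 S (Finset.mem_union_left _ (Finset.mem_insert_self _ _))
      · apply Finset.mem_union_right
        simp only [Finset.mem_filter, Finset.mem_univ, true_and]
        refine ⟨u, Finset.mem_union_left _ (Finset.mem_insert_self _ _),
          (SimpleGraph.mem_neighborFinset G u y).mp hy, ?_⟩
        have hsub : G.neighborFinset u \ S ⊆ {w} := by
          intro z hz
          rw [Finset.mem_sdiff] at hz
          obtain ⟨hz1, hz2⟩ := hz
          rw [Finset.mem_singleton]
          by_contra hne'
          exact hz2 (Finset.mem_union_left _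
            (Finset.mem_insert_of_mem (Finset.mem_erase.mpr ⟨hne', hz1⟩)))
        calc (G.neighborFinset u \ S).card ≤ ({w} : Finset V).card :=
              Finset.card_le_card hsub
          _ = 1 := Finset.card_singleton w
    · exact (Finset.subset_union_right).trans (subset_kStep G 1 S)
  have hforcing : IsKForcingSet G 1 S := isKForcingSet_of_subset_kStep G hCT hT
  have hScard : S.card ≤ G.degree u + T.card := by
    calc S.card ≤ (insert u ((G.neighborFinset u).erase w)).card + T.card :=
          Finset.card_union_le _ _
      _ ≤ ((G.neighborFinset u).erase w).card + 1 + T.card := by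
          have := Finset.card_insert_le u ((G.neighborFinset u).erase w)
          omega
      _ = G.degree u + T.card := by
          rw [Finset.card_erase_of_mem hw, SimpleGraph.card_neighborFinset_eq_degree]
          omega
  have hZ : zeroForcingNumber G ≤ G.degree u + T.card := by
    refine le_trans (Nat.sInf_le ⟨S, rfl, hforcing⟩) hScard
  -- cast to reals
  have hCuniv : C.card ≤ Fintype.card V := by
    rw [← Finset.card_univ]; exact Finset.card_le_card (Finset.subset_univ _)
  have hsdiff : (Finset.univ \ C).card = Fintype.card V - (G.degree u + 1) := by
    rw [Finset.card_sdiff_of_subset (Finset.subset_univ _), Finset.card_univ, hCcard]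
  rw [hsdiff] at hb
  set d : ℕ := G.maxDegree with hd
  set δ : ℕ := G.degree u with hδ
  set N : ℕ := Fintype.card V with hN
  have hδN : δ + 1 ≤ N := by omega
  have hδd : δ ≤ d := G.degree_le_maxDegree u
  have hminδ : G.minDegree = δ := hu
  -- real versions
  have hbR : ((d : ℝ) - 1) * T.card ≤ ((d : ℝ) - 2) * ((N : ℝ) - δ - 1) := by
    have := hb
    have h1 : ((d - 1 : ℕ) : ℝ) = (d : ℝ) - 1 := by
      push_cast [Nat.cast_sub (by omega : 1 ≤ d)]; ring
    have h2 : ((d - 2 : ℕ) : ℝ) = (d : ℝ) - 2 := by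
      push_cast [Nat.cast_sub hΔ]; ring
    have h3 : ((N - (δ + 1) : ℕ) : ℝ) = (N : ℝ) - δ - 1 := by
      push_cast [Nat.cast_sub hδN]; ring
    calc ((d : ℝ) - 1) * T.card = ((d - 1 : ℕ) : ℝ) * ((T.card : ℕ) : ℝ) := by rw [h1]
      _ ≤ ((d - 2 : ℕ) : ℝ) * ((N - (δ + 1) : ℕ) : ℝ) := by exact_mod_cast this
      _ = ((d : ℝ) - 2) * ((N : ℝ) - δ - 1) := by rw [h2, h3]
  have hZR : (zeroForcingNumber G : ℝ) ≤ (δ : ℝ) + T.card := by exact_mod_cast hZ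
  have hdR : (2 : ℝ) ≤ (d : ℝ) := by exact_mod_cast hΔ
  have hdpos : (0 : ℝ) < (d : ℝ) - 1 := by linarith
  rw [hminδ, le_div_iff₀ hdpos]
  nlinarith [mul_le_mul_of_nonneg_right hZR (le_of_lt hdpos), hbR,
    (by exact_mod_cast hδN : (δ : ℝ) + 1 ≤ (N : ℝ))]
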